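/- If M₀ is an admissible lattice in N₀, then the W₀-module (M₀ + τ(M₀))/M₀ has length at most 1; equivalently, dim_𝔽 (M₀ + τ(M₀))/M₀ ≤ 1. -/

import Mathlib

noncomputable section

namespace QURZ

variable {W₀ : Type*} [CommRing W₀]

/-- The length of `B / A`: the Krull dimension of the interval `[A, B]`
in the lattice of submodules. -/
noncomputable def relLength {M : Type*} [AddCommGroup M] [Module W₀ M]
    (A B : Submodule W₀ M) : WithBot ℕ∞ :=
  Order.krullDim (Set.Icc A B)

/-- `SubIdx A B d` means `A ⊆ B` and the quotient `B/A` has length `d`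
(written `A ⊂^d B` in the paper). -/
def SubIdx {M : Type*} [AddCommGroup M] [Module W₀ M]
    (A B : Submodule W₀ M) (d : ℕ) : Prop :=
  A ≤ B ∧ relLength A B = ((d : ℕ∞) : WithBot ℕ∞)

/-- The image `c • A` of a submodule `A` under scalar multiplication by `c`. -/
def smulLat {M : Type*} [AddCommGroup M] [Module W₀ M] (c : W₀) (A : Submodule W₀ M) :
    Submodule W₀ M where
  carrier := {x | ∃ m ∈ A, c • m = x}
  zero_mem' := ⟨0, A.zero_mem, smul_zero c⟩
  add_mem' := by
    rintro a b ⟨m, hm, rfl⟩ ⟨n, hn, rfl⟩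
    exact ⟨m + n, A.add_mem hm hn, smul_add c m n⟩
  smul_mem' := by
    rintro d x ⟨m, hm, rfl⟩
    exact ⟨d • m, A.smul_mem d hm, by rw [smul_smul, smul_smul, mul_comm]⟩

/-- The image of a submodule under a `σ₀`-semilinear map, where `σ₀` is a ring
automorphism. -/
def mapLat {M M' : Type*} [AddCommGroup M] [Module W₀ M] [AddCommGroup M'] [Module W₀ M']
    {σ₀ : W₀ ≃+* W₀} (g : M →ₛₗ[(σ₀ : W₀ →+* W₀)] M') (A : Submodule W₀ M) :
    Submodule W₀ M' where
  carrier := g '' A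
  zero_mem' := ⟨0, A.zero_mem, map_zero g⟩
  add_mem' := by
    rintro a b ⟨m, hm, rfl⟩ ⟨n, hn, rfl⟩
    exact ⟨m + n, A.add_mem hm hn, map_add g m n⟩
  smul_mem' := by
    rintro c x ⟨m, hm, rfl⟩
    refine ⟨σ₀.symm c • m, A.smul_mem _ hm, ?_⟩
    rw [map_smulₛₗ]
    simp

variable {K₀ : Type*} [Field K₀] [Algebra W₀ K₀]
variable {N₀ : Type*} [AddCommGroup N₀] [Module K₀ N₀] [Module W₀ N₀] [IsScalarTower W₀ K₀ N₀]

/-- A lattice: a finitely generated `W₀`-submodule spanning the ambient space over `K₀`. -/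
def IsLattice (A : Submodule W₀ N₀) : Prop :=
  A.FG ∧ Submodule.span K₀ (A : Set N₀) = ⊤

/-- The dual lattice with respect to a bilinear form, consisting of the vectors
pairing into `W₀` with all elements of `A`. -/
def dualLat (form : N₀ →ₗ[K₀] N₀ →ₗ[K₀] K₀) (A : Submodule W₀ N₀) : Submodule W₀ N₀ where
  carrier := {x | ∀ y ∈ A, form x y ∈ (algebraMap W₀ K₀).range}
  zero_mem' := fun y _ => by rw [map_zero, LinearMap.zero_apply]; exact zero_mem _
  add_mem' := by
    intro a b ha hb y hy
    rw [map_add, LinearMap.add_apply]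
    exact add_mem (ha y hy) (hb y hy)
  smul_mem' := by
    intro c x hx y hy
    rw [← IsScalarTower.algebraMap_smul K₀ c x, map_smul, LinearMap.smul_apply, smul_eq_mul]
    exact mul_mem (RingHom.mem_range_self _ c) (hx y hy)

/-- An admissible lattice: `p M₀^∨ ⊆ M₀ ⊂² M₀^∨` and `p τ(M₀^∨) ⊆ M₀ ⊂² τ(M₀^∨)`.
These are the `𝔽`-points of the reduced quaternionic unitary Rapoport–Zink space `ℳ`
with paramodular level. -/
def IsAdmissible (p : ℕ) (form : N₀ →ₗ[K₀] N₀ →ₗ[K₀] K₀)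
    {σ₀ : W₀ ≃+* W₀} (τ : N₀ →ₛₗ[(σ₀ : W₀ →+* W₀)] N₀) (M₀ : Submodule W₀ N₀) : Prop :=
  IsLattice (K₀ := K₀) M₀ ∧
  smulLat (p : W₀) (dualLat form M₀) ≤ M₀ ∧
  SubIdx M₀ (dualLat form M₀) 2 ∧
  smulLat (p : W₀) (mapLat τ (dualLat form M₀)) ≤ M₀ ∧
  SubIdx M₀ (mapLat τ (dualLat form M₀)) 2

/-- A web pair `(S₀, T₀)` for an admissible lattice `M₀`:
`pM₀^∨ ⊂¹ S₀ ⊂¹ M₀ ⊂¹ T₀ ⊂¹ M₀^∨`, `pτ(T₀^∨) ⊆ S₀ ⊆ τ(T₀^∨)` and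
`pτ(S₀^∨) ⊆ T₀ ⊆ τ(S₀^∨)`.  Web pairs for `M₀` are the points of the fiber over `M₀`
of the projection from Iwahori level `ℳ_Iw(𝔽)` to `ℳ(𝔽)`. -/
def IsWebPair (p : ℕ) (form : N₀ →ₗ[K₀] N₀ →ₗ[K₀] K₀)
    {σ₀ : W₀ ≃+* W₀} (τ : N₀ →ₛₗ[(σ₀ : W₀ →+* W₀)] N₀)
    (M₀ S₀ T₀ : Submodule W₀ N₀) : Prop :=
  IsLattice (K₀ := K₀) S₀ ∧ IsLattice (K₀ := K₀) T₀ ∧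
  SubIdx (smulLat (p : W₀) (dualLat form M₀)) S₀ 1 ∧
  SubIdx S₀ M₀ 1 ∧ SubIdx M₀ T₀ 1 ∧ SubIdx T₀ (dualLat form M₀) 1 ∧
  smulLat (p : W₀) (mapLat τ (dualLat form T₀)) ≤ S₀ ∧
  S₀ ≤ mapLat τ (dualLat form T₀) ∧
  smulLat (p : W₀) (mapLat τ (dualLat form S₀)) ≤ T₀ ∧
  T₀ ≤ mapLat τ (dualLat form S₀)



section AuxLemmas

open Order

/-- Extend a strict chain in `[A,B]` by `C` when `B < C`. -/
lemma icc_chain_extend {α : Type*} [PartialOrder α] {A B C : α} (hBC : B < C) (hAC : A ≤ C)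
    (p : LTSeries (Set.Icc A B)) : ∃ q : LTSeries (Set.Icc A C), q.length = p.length + 1 := by
  have hf : StrictMono (fun x : Set.Icc A B => (⟨x.1, x.2.1, x.2.2.trans hBC.le⟩ : Set.Icc A C)) :=
    fun x y h => h
  refine ⟨(p.map _ hf).snoc ⟨C, hAC, le_rfl⟩ ?_, rfl⟩
  show (p.map _ hf).last < _
  rw [LTSeries.last_map]
  exact Subtype.mk_lt_mk.mpr (lt_of_le_of_lt p.last.2.2 hBC)

variable {N : Type*} [AddCommGroup N] [Module W₀ N]

lemma relLength_self_le_zero (A : Submodule W₀ N) : relLength A A ≤ 0 := by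
  have : Subsingleton (Set.Icc A A) :=
    ⟨fun x y => Subtype.ext ((le_antisymm x.2.2 x.2.1).trans (le_antisymm y.2.1 y.2.2))⟩
  exact Order.krullDim_nonpos_of_subsingleton

lemma mapLat_mono {σ₀ : W₀ ≃+* W₀} (g : N →ₛₗ[(σ₀ : W₀ →+* W₀)] N)
    {A B : Submodule W₀ N} (h : A ≤ B) : mapLat g A ≤ mapLat g B := by
  rintro x ⟨m, hm, rfl⟩
  exact ⟨m, h hm, rfl⟩

lemma mapLat_injective {σ₀ : W₀ ≃+* W₀} {g : N →ₛₗ[(σ₀ : W₀ →+* W₀)] N}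
    (hg : Function.Injective g) {A B : Submodule W₀ N} (h : mapLat g A = mapLat g B) : A = B := by
  ext m
  constructor <;> intro hm
  · obtain ⟨n, hn, hgn⟩ : g m ∈ mapLat g B := h ▸ ⟨m, hm, rfl⟩
    rwa [← hg hgn]
  · obtain ⟨n, hn, hgn⟩ : g m ∈ mapLat g A := h.symm ▸ ⟨m, hm, rfl⟩
    rwa [← hg hgn]

lemma dualLat_sup (form : N₀ →ₗ[K₀] N₀ →ₗ[K₀] K₀) (A B : Submodule W₀ N₀) :
    dualLat form (A ⊔ B) = dualLat form A ⊓ dualLat form B := by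
  ext x
  constructor
  · intro h
    exact ⟨fun y hy => h y (Submodule.mem_sup_left hy),
      fun y hy => h y (Submodule.mem_sup_right hy)⟩
  · rintro ⟨hA, hB⟩ y hy
    obtain ⟨a, ha, b, hb, rfl⟩ := Submodule.mem_sup.mp hy
    rw [map_add]
    exact add_mem (hA a ha) (hB b hb)

lemma dualLat_mapLat (σ : K₀ ≃+* K₀) {σ₀ : W₀ ≃+* W₀}
    (hσ : ∀ c : W₀, algebraMap W₀ K₀ (σ₀ c) = σ (algebraMap W₀ K₀ c))
    (form : N₀ →ₗ[K₀] N₀ →ₗ[K₀] K₀)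
    (τ : N₀ →ₛₗ[(σ₀ : W₀ →+* W₀)] N₀) (hτ_bij : Function.Bijective τ)
    (hτ_form : ∀ x y, form (τ x) (τ y) = σ (form x y)) (A : Submodule W₀ N₀) :
    dualLat form (mapLat τ A) = mapLat τ (dualLat form A) := by
  have hrange : ∀ v : K₀, σ v ∈ (algebraMap W₀ K₀).range ↔ v ∈ (algebraMap W₀ K₀).range := by
    intro v
    constructor
    · rintro ⟨c, hc⟩
      refine ⟨σ₀.symm c, σ.injective ?_⟩
      rw [← hσ, RingEquiv.apply_symm_apply, hc]
    · rintro ⟨c, rfl⟩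
      exact ⟨σ₀ c, hσ c⟩
  ext x
  constructor
  · intro hx
    obtain ⟨z, rfl⟩ := hτ_bij.2 x
    refine ⟨z, fun y hy => ?_, rfl⟩
    have h1 := hx (τ y) ⟨y, hy, rfl⟩
    rw [hτ_form] at h1
    exact (hrange _).mp h1
  · rintro ⟨z, hz, rfl⟩ y ⟨m, hm, rfl⟩
    rw [hτ_form]
    exact (hrange _).mpr (hz m hm)

lemma form_skew (form : N₀ →ₗ[K₀] N₀ →ₗ[K₀] K₀) (halt : ∀ x, form x x = 0) (x y : N₀) :
    form x y = - form y x := by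
  have h := halt (x + y)
  simp only [map_add, LinearMap.add_apply, halt x, halt y, zero_add, add_zero] at h
  exact eq_neg_of_add_eq_zero_right h

lemma dualLat_dualLat [IsDomain W₀] [IsPrincipalIdealRing W₀] [IsFractionRing W₀ K₀]
    (form : N₀ →ₗ[K₀] N₀ →ₗ[K₀] K₀)
    (halt : ∀ x, form x x = 0)
    (hnondeg : ∀ x, (∀ y, form x y = 0) → x = 0)
    {M : Submodule W₀ N₀} (hM : IsLattice (K₀ := K₀) M) :
    dualLat form (dualLat form M) = M := by
  classical
  have hskew := form_skew form halt
  have hinj : Function.Injective (algebraMap W₀ K₀) := IsFractionRing.injective W₀ K₀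
  haveI : NoZeroSMulDivisors W₀ N₀ := by
    refine ⟨fun {c x} h => ?_⟩
    rw [← algebraMap_smul K₀ c x] at h
    rcases smul_eq_zero.mp h with h | h
    · exact Or.inl ((map_eq_zero_iff _ hinj).mp h)
    · exact Or.inr h
  haveI : Module.Finite W₀ M := Module.Finite.iff_fg.mpr hM.1
  haveI : Module.Free W₀ M := Module.free_of_finite_type_torsion_free'
  set ι := Module.Free.ChooseBasisIndex W₀ M with hι
  let b : Module.Basis ι W₀ M := Module.Free.chooseBasis W₀ M
  let v : ι → N₀ := fun i => (b i : N₀)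
  have hVW : LinearIndependent W₀ v :=
    b.linearIndependent.map' M.subtype (Submodule.ker_subtype M)
  have hVK : LinearIndependent K₀ v := hVW.localization K₀ (nonZeroDivisors W₀)
  have hrv : Set.range v = M.subtype '' Set.range b := by
    rw [← Set.range_comp]; rfl
  have hMspan : Submodule.span W₀ (Set.range v) = M := by
    rw [hrv, ← Submodule.map_span, b.span_eq, Submodule.map_top, Submodule.range_subtype]
  have hspanK : Submodule.span K₀ (Set.range v) = ⊤ := by
    rw [← top_le_iff, ← hM.2]
    refine Submodule.span_le.mpr ?_
    intro x hx
    have hx' : x ∈ Submodule.span W₀ (Set.range v) := hMspan.symm ▸ hx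
    exact Submodule.span_subset_span W₀ K₀ _ hx'
  let e : Module.Basis ι K₀ N₀ := Module.Basis.mk hVK (by rw [hspanK])
  have he : ∀ i, e i = v i := fun i => Module.Basis.mk_apply _ _ i
  haveI : FiniteDimensional K₀ N₀ := Module.Finite.of_basis e
  have hvmem : ∀ i, v i ∈ M := fun i => (b i).2
  have hmem_dual : ∀ x : N₀,
      x ∈ dualLat form M ↔ ∀ i, form x (v i) ∈ (algebraMap W₀ K₀).range := by
    intro x
    constructor
    · intro h i
      exact h (v i) (hvmem i)
    · intro h y hy
      rw [← hMspan] at hy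
      induction hy using Submodule.span_induction with
      | mem z hz => obtain ⟨i, rfl⟩ := hz; exact h i
      | zero => rw [map_zero]; exact zero_mem _
      | add a c _ _ ha hc => rw [map_add]; exact add_mem ha hc
      | smul r a _ ha =>
          rw [← algebraMap_smul K₀ r a, map_smul, smul_eq_mul]
          exact mul_mem (RingHom.mem_range_self _ r) ha
  let Φ : N₀ →ₗ[K₀] (ι → K₀) := LinearMap.pi (fun j => form.flip (e j))
  have hΦapp : ∀ (x : N₀) (j : ι), Φ x j = form x (e j) := fun x j => rfl
  have hΦinj : Function.Injective Φ := by
    rw [← LinearMap.ker_eq_bot, Submodule.eq_bot_iff]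
    intro x hx
    have hx0 : ∀ j, form x (e j) = 0 := by
      intro j
      have := congrFun (LinearMap.mem_ker.mp hx) j
      rwa [hΦapp] at this
    refine hnondeg x fun y => ?_
    have hy : y ∈ Submodule.span K₀ (Set.range v) := hspanK ▸ Submodule.mem_top
    induction hy using Submodule.span_induction with
    | mem z hz => obtain ⟨i, rfl⟩ := hz; rw [← he i]; exact hx0 i
    | zero => exact map_zero _
    | add a c _ _ ha hc => rw [map_add, ha, hc, add_zero]
    | smul r a _ ha => rw [map_smul, ha, smul_zero]
  have hΦbij : Function.Bijective Φ := by
    refine ⟨hΦinj, ?_⟩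
    have hfr : Module.finrank K₀ N₀ = Module.finrank K₀ (ι → K₀) := by
      rw [Module.finrank_pi, Module.finrank_eq_card_basis e]
    exact (LinearMap.injective_iff_surjective_of_finrank_eq_finrank hfr).mp hΦinj
  let Φe := LinearEquiv.ofBijective Φ hΦbij
  let f : ι → N₀ := fun i => Φe.symm (Pi.single i 1)
  have hfe : ∀ i j, form (f i) (e j) = if j = i then 1 else 0 := by
    intro i j
    have h1 : Φ (f i) = Pi.single i 1 := Φe.apply_symm_apply _
    rw [show form (f i) (e j) = Φ (f i) j from rfl, h1, Pi.single_apply]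
  have hfdual : ∀ i, f i ∈ dualLat form M := by
    intro i
    rw [hmem_dual]
    intro j
    rw [← he j, hfe i j]
    split
    · exact ⟨1, map_one _⟩
    · exact ⟨0, map_zero _⟩
  ext x
  constructor
  · intro hx
    have hcoord : ∀ j, e.repr x j ∈ (algebraMap W₀ K₀).range := by
      intro j
      have h1 := hx (f j) (hfdual j)
      have hterm : ∀ i, form (e i) (f j) = -(if i = j then (1 : K₀) else 0) := fun i => by
        rw [hskew, hfe j i]
      have h2 : form x (f j) = - e.repr x j := by
        conv_lhs => rw [← e.sum_repr x]
        rw [map_sum, LinearMap.sum_apply]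
        simp_rw [map_smul, LinearMap.smul_apply, smul_eq_mul, hterm, mul_neg, mul_ite, mul_one,
          mul_zero, Finset.sum_neg_distrib, Finset.sum_ite_eq', Finset.mem_univ, if_true]
      rw [h2] at h1
      obtain ⟨c, hc⟩ := h1
      exact ⟨-c, by rw [map_neg, hc, neg_neg]⟩
    choose c hc using hcoord
    have hxsum : x = ∑ i, c i • v i := by
      conv_lhs => rw [← e.sum_repr x]
      refine Finset.sum_congr rfl fun i _ => ?_
      rw [← hc i, algebraMap_smul, he]
    rw [hxsum]
    exact Submodule.sum_mem _ fun i _ => Submodule.smul_mem _ _ (hvmem i)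
  · intro hx y hy
    rw [hskew x y]
    exact neg_mem (hy x hx)

end AuxLemmas

/-- If `M₀` is an admissible lattice in `N₀`, then the `W₀`-module
`(M₀ + τ(M₀))/M₀` has length at most `1`. -/
theorem statement_2
    (p : ℕ) (hp : Nat.Prime p) (hp_odd : p ≠ 2)
    {W₀ : Type*} [CommRing W₀] [IsDomain W₀] [IsDiscreteValuationRing W₀]
    {K₀ : Type*} [Field K₀] [Algebra W₀ K₀] [IsFractionRing W₀ K₀]
    (hp_irr : Irreducible (p : W₀))
    (σ : K₀ ≃+* K₀) (σ₀ : W₀ ≃+* W₀)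
    (hσ : ∀ c : W₀, algebraMap W₀ K₀ (σ₀ c) = σ (algebraMap W₀ K₀ c))
    {N₀ : Type*} [AddCommGroup N₀] [Module K₀ N₀] [Module W₀ N₀] [IsScalarTower W₀ K₀ N₀]
    (hdim : Module.finrank K₀ N₀ = 4)
    (form : N₀ →ₗ[K₀] N₀ →ₗ[K₀] K₀)
    (halt : ∀ x, form x x = 0)
    (hnondeg : ∀ x, (∀ y, form x y = 0) → x = 0)
    (τ : N₀ →ₛₗ[(σ₀ : W₀ →+* W₀)] N₀)
    (hτ_bij : Function.Bijective τ)
    (hτ_semilinear : ∀ (a : K₀) (x : N₀), τ (a • x) = σ a • τ x)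
    (hτ_form : ∀ x y, form (τ x) (τ y) = σ (form x y))
    (M₀ : Submodule W₀ N₀)
    (hM₀ : IsAdmissible p form τ M₀) :
    relLength M₀ (M₀ ⊔ mapLat τ M₀) ≤ ((1 : ℕ∞) : WithBot ℕ∞) := by
  classical
  obtain ⟨hlat, -, ⟨hMD, hMD2⟩, -, ⟨hMtD, hMtD2⟩⟩ := hM₀
  set D := dualLat form M₀ with hD
  by_contra hcon
  obtain ⟨p, hp⟩ : ∃ p : LTSeries (Set.Icc M₀ (M₀ ⊔ mapLat τ M₀)), 2 ≤ p.length := by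
    by_contra hall
    push_neg at hall
    apply hcon
    refine iSup_le fun p => ?_
    have h1 : p.length ≤ 1 := by have := hall p; omega
    exact_mod_cast h1
  have hEle : M₀ ⊔ mapLat τ M₀ ≤ mapLat τ D := sup_le hMtD (mapLat_mono τ hMD)
  have hMleE : M₀ ≤ M₀ ⊔ mapLat τ M₀ := le_sup_left
  have hEeq : M₀ ⊔ mapLat τ M₀ = mapLat τ D := by
    by_contra hne
    obtain ⟨q, hq⟩ := icc_chain_extend (lt_of_le_of_ne hEle hne) hMtD p
    have h3 : ((q.length : ℕ) : WithBot ℕ∞) ≤ ((2 : ℕ∞) : WithBot ℕ∞) :=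
      le_of_le_of_eq (Order.LTSeries.length_le_krullDim q) hMtD2
    have h4 : q.length ≤ 2 := by exact_mod_cast h3
    omega
  have h1 : dualLat form (M₀ ⊔ mapLat τ M₀) = D ⊓ mapLat τ D := by
    rw [dualLat_sup, ← hD, dualLat_mapLat σ hσ form τ hτ_bij hτ_form, ← hD]
  have h2 : dualLat form (mapLat τ D) = mapLat τ M₀ := by
    rw [dualLat_mapLat σ hσ form τ hτ_bij hτ_form,
      dualLat_dualLat form halt hnondeg hlat]
  have h3 : mapLat τ M₀ = D ⊓ mapLat τ D := by rw [← h2, ← h1, hEeq]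
  have hMtM : M₀ ≤ mapLat τ M₀ := h3 ▸ le_inf hMD hMtD
  have h5 : mapLat τ M₀ = mapLat τ D := by
    rw [← sup_eq_right.mpr hMtM]
    exact hEeq
  have h6 : M₀ = D := mapLat_injective hτ_bij.1 h5
  have h7 : relLength M₀ D ≤ 0 := h6 ▸ relLength_self_le_zero M₀
  rw [hMD2] at h7
  norm_num at h7

end QURZ
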